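/- Let τ be a correct compositional translation from SYNCSIMPLE to LOCKSIMPLE_{2,IS} of blocking type (P_1P_1, P_2P_2). Then the prefix of τ(!) cannot be of the form T_1^+ T_2 nor of the form T_2^+ T_1 (a nonempty block of one take symbol followed by the other take symbol), for any initial store. -/

import Mathlib

/-- Symbols of SYNCSIMPLE: `!` (bang) and `?` (ques). -/
inductive SSym | bang | ques
deriving DecidableEq

/-- A SYNCSIMPLE subprocess: a string over {!,?} ending with `0` (false) or `✓` (true). -/
abbrev SSub := List SSym × Bool

/-- A SYNCSIMPLE process: a multiset of subprocesses. -/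
abbrev SProc := Multiset SSub

/-- The SYS reduction: a leading `!` and a leading `?` of two subprocesses are consumed. -/
def SysStep (P Q : SProc) : Prop :=
  ∃ (u1 u2 : List SSym) (b1 b2 : Bool) (R : SProc),
    P = (SSym.bang :: u1, b1) ::ₘ (SSym.ques :: u2, b2) ::ₘ R ∧
    Q = (u1, b1) ::ₘ (u2, b2) ::ₘ R

/-- A process is successful if it contains the subprocess `✓`. -/
def SSuccessful (P : SProc) : Prop := (([], true) : SSub) ∈ P

def SMayConv (P : SProc) : Prop :=
  ∃ Q, Relation.ReflTransGen SysStep P Q ∧ SSuccessful Q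

def SMustConv (P : SProc) : Prop :=
  ∀ Q, Relation.ReflTransGen SysStep P Q → SMayConv Q

/-- Lock operations: put `P_i` and take `T_i`. -/
inductive LOp | put | take
deriving DecidableEq

abbrev LSym (k : ℕ) := LOp × Fin k
abbrev LSub (k : ℕ) := List (LSym k) × Bool
abbrev LProc (k : ℕ) := Multiset (LSub k)
/-- The store of `k` locks: `true` = full (■), `false` = empty (□). -/
abbrev Store (k : ℕ) := Fin k → Bool

/-- LOCKSIMPLE step: `P_i` fills an empty lock `i` (blocks if full);
    `T_i` empties lock `i` and never blocks. -/
def LockStep {k : ℕ} : (LProc k × Store k) → (LProc k × Store k) → Prop :=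
  fun s t => ∃ (i : Fin k) (u : List (LSym k)) (b : Bool) (R : LProc k),
    ((s.1 = ((LOp.put, i) :: u, b) ::ₘ R ∧ s.2 i = false ∧
      t.1 = (u, b) ::ₘ R ∧ t.2 = Function.update s.2 i true) ∨
     (s.1 = ((LOp.take, i) :: u, b) ::ₘ R ∧
      t.1 = (u, b) ::ₘ R ∧ t.2 = Function.update s.2 i false))

def LSuccessful {k : ℕ} (s : LProc k × Store k) : Prop := (([], true) : LSub k) ∈ s.1

def LMayConv {k : ℕ} (s : LProc k × Store k) : Prop :=
  ∃ t, Relation.ReflTransGen LockStep s t ∧ LSuccessful t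

def LMustConv {k : ℕ} (s : LProc k × Store k) : Prop :=
  ∀ t, Relation.ReflTransGen LockStep s t → LMayConv t

/-- The compositional translation determined by the strings `tb = τ(!)` and `tq = τ(?)`,
    applied to a subprocess. -/
def transSub {k : ℕ} (tb tq : List (LSym k)) (u : SSub) : LSub k :=
  (u.1.flatMap (fun c => match c with | SSym.bang => tb | SSym.ques => tq), u.2)

/-- The compositional translation applied to a process. -/
def transProc {k : ℕ} (tb tq : List (LSym k)) (P : SProc) : LProc k :=
  P.map (transSub tb tq)

/-- Correctness of the compositional translation `(tb, tq)` with initial store `IS`: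
    may- and must-convergence are preserved and reflected. -/
def Correct {k : ℕ} (IS : Store k) (tb tq : List (LSym k)) : Prop :=
  ∀ P : SProc,
    (SMayConv P ↔ LMayConv (transProc tb tq P, IS)) ∧
    (SMustConv P ↔ LMustConv (transProc tb tq P, IS))

/-- The solo execution of the string `s` from store `IS` reaches the point where
    `(put, i) :: rest` remains and deadlocks there since lock `i` is full. -/
def SoloBlocked {k : ℕ} (IS : Store k) (s : List (LSym k)) (i : Fin k)
    (rest : List (LSym k)) : Prop :=
  ∃ C : Store k,
    Relation.ReflTransGen LockStep (({(s, false)} : LProc k), IS)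
      (({((LOp.put, i) :: rest, false)} : LProc k), C) ∧
    C i = true

/-- Blocking type `P_i`: the blocking prefix is `R P_i` with `R` free of `P_i, T_i`. -/
def BlockingTypeP {k : ℕ} (IS : Store k) (s : List (LSym k)) (i : Fin k) : Prop :=
  ∃ r rest, s = r ++ (LOp.put, i) :: rest ∧ (∀ x ∈ r, x.2 ≠ i) ∧
    SoloBlocked IS s i rest

/-- Blocking type `P_i P_i`: the blocking prefix is `R₁ P_i R₂ P_i` with
    `R₂` free of `P_i, T_i`, deadlocking exactly before the last `P_i`. -/
def BlockingTypePP {k : ℕ} (IS : Store k) (s : List (LSym k)) (i : Fin k) : Prop :=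
  ∃ r1 r2 rest, s = r1 ++ (LOp.put, i) :: r2 ++ (LOp.put, i) :: rest ∧
    (∀ x ∈ r2, x.2 ≠ i) ∧ SoloBlocked IS s i rest

section Aux

lemma step_take {k : ℕ} (i : Fin k) (u : List (LSym k)) (b : Bool) (R : LProc k)
    (C : Store k) :
    LockStep (((LOp.take, i) :: u, b) ::ₘ R, C) ((u, b) ::ₘ R, Function.update C i false) :=
  ⟨i, u, b, R, Or.inr ⟨rfl, rfl, rfl⟩⟩

lemma step_put {k : ℕ} (i : Fin k) (u : List (LSym k)) (b : Bool) (R : LProc k)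
    (C : Store k) (h : C i = false) :
    LockStep (((LOp.put, i) :: u, b) ::ₘ R, C) ((u, b) ::ₘ R, Function.update C i true) :=
  ⟨i, u, b, R, Or.inl ⟨rfl, h, rfl, rfl⟩⟩

lemma takes_run {k : ℕ} (l : List (LSym k)) (hl : ∀ x ∈ l, x.1 = LOp.take) :
    ∀ (u : List (LSym k)) (b : Bool) (R : LProc k) (C : Store k),
    ∃ C', Relation.ReflTransGen LockStep ((l ++ u, b) ::ₘ R, C) ((u, b) ::ₘ R, C') := by
  induction l with
  | nil => intro u b R C; exact ⟨C, by simpa using Relation.ReflTransGen.refl⟩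
  | cons x l ih =>
    intro u b R C
    obtain ⟨op, i⟩ := x
    have hop : op = LOp.take := hl _ List.mem_cons_self
    subst hop
    obtain ⟨C', h'⟩ := ih (fun y hy => hl y (List.mem_cons_of_mem _ hy)) u b R
      (Function.update C i false)
    exact ⟨C', Relation.ReflTransGen.head (step_take i (l ++ u) b R C) h'⟩

/-- The key engine: a copy of `s` (ending in ✓) can be fully executed with enough
helper copies of `tb`, where every lock's take is reachable in `tb` through takes only. -/
lemma run_copy (tb : List (LSym 2))
    (H : ∀ i : Fin 2, ∃ l r, tb = l ++ (LOp.take, i) :: r ∧ ∀ x ∈ l, x.1 = LOp.take) :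
    ∀ (s : List (LSym 2)) (h : ℕ) (J : LProc 2) (C : Store 2),
      s.countP (fun x => decide (x.1 = LOp.put)) ≤ h →
      ∃ t, Relation.ReflTransGen LockStep
        ((s, true) ::ₘ (Multiset.replicate h (tb, true) + J), C) t ∧ LSuccessful t := by
  intro s
  induction s with
  | nil =>
    intro h J C _
    exact ⟨_, Relation.ReflTransGen.refl, Multiset.mem_cons_self _ _⟩
  | cons x s ih =>
    intro h J C hcnt
    obtain ⟨op, i⟩ := x
    cases op with
    | take =>
      have hcnt' : s.countP (fun x => decide (x.1 = LOp.put)) ≤ h := by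
        simpa [List.countP_cons] using hcnt
      obtain ⟨t, ht, hs⟩ := ih h J (Function.update C i false) hcnt'
      exact ⟨t, Relation.ReflTransGen.head (step_take i s true _ C) ht, hs⟩
    | put =>
      have hcnt' : s.countP (fun x => decide (x.1 = LOp.put)) + 1 ≤ h := by
        simpa [List.countP_cons] using hcnt
      cases hC : C i with
      | false =>
        obtain ⟨t, ht, hs⟩ := ih h J (Function.update C i true) (by omega)
        exact ⟨t, Relation.ReflTransGen.head (step_put i s true _ C hC) ht, hs⟩
      | true =>
        obtain ⟨h', rfl⟩ : ∃ h', h = h' + 1 := ⟨h - 1, by omega⟩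
        obtain ⟨l, r, htb, hl⟩ := H i
        -- bring a helper copy to the front
        have e1 : ((LOp.put, i) :: s, true) ::ₘ
            (Multiset.replicate (h' + 1) (tb, true) + J) =
            (l ++ (LOp.take, i) :: r, true) ::ₘ
              (((LOp.put, i) :: s, true) ::ₘ (Multiset.replicate h' (tb, true) + J)) := by
          rw [Multiset.replicate_succ, ← htb]
          simp [Multiset.cons_swap, Multiset.cons_add]
        obtain ⟨C1, hrun⟩ := takes_run l hl ((LOp.take, i) :: r) true
          (((LOp.put, i) :: s, true) ::ₘ (Multiset.replicate h' (tb, true) + J)) C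
        -- after the takes, do the take of lock i
        have hstep1 := step_take i r true
          (((LOp.put, i) :: s, true) ::ₘ (Multiset.replicate h' (tb, true) + J)) C1
        -- now the put of the main copy can proceed
        have hstep2 := step_put i s true
          ((r, true) ::ₘ (Multiset.replicate h' (tb, true) + J))
          (Function.update C1 i false) (by simp)
        obtain ⟨t, ht, hs⟩ := ih h' ((r, true) ::ₘ J)
          (Function.update (Function.update C1 i false) i true) (by omega)
        refine ⟨t, ?_, hs⟩
        rw [e1]
        refine hrun.trans (Relation.ReflTransGen.head hstep1 ?_)
        have e2 : ((r, true) ::ₘ (((LOp.put, i) :: s, true) ::ₘ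
            (Multiset.replicate h' (tb, true) + J)) : LProc 2) =
            ((LOp.put, i) :: s, true) ::ₘ
              ((r, true) ::ₘ (Multiset.replicate h' (tb, true) + J)) :=
          Multiset.cons_swap _ _ _
        rw [e2]
        refine Relation.ReflTransGen.head hstep2 ?_
        have e3 : (Multiset.replicate h' (tb, true) + ((r, true) ::ₘ J) : LProc 2) =
            (r, true) ::ₘ (Multiset.replicate h' (tb, true) + J) := by
          rw [Multiset.add_cons]
        rw [e3] at ht
        exact ht

/-- The process `!✓ | ⋯ | !✓` cannot do any SYS step. -/
lemma no_sys_step (m : ℕ) (Q : SProc) :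
    ¬ SysStep (Multiset.replicate m (([SSym.bang], true) : SSub)) Q := by
  rintro ⟨u1, u2, b1, b2, R, hP, -⟩
  have hmem : ((SSym.ques :: u2, b2) : SSub) ∈
      Multiset.replicate m (([SSym.bang], true) : SSub) := by
    rw [hP]; exact Multiset.mem_cons_of_mem (Multiset.mem_cons_self _ _)
  have := Multiset.eq_of_mem_replicate hmem
  simp at this

lemma not_smayconv (m : ℕ) :
    ¬ SMayConv (Multiset.replicate m (([SSym.bang], true) : SSub)) := by
  rintro ⟨Q, hQ, hs⟩
  rcases hQ.cases_head with rfl | ⟨Q', h1, -⟩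
  · have := Multiset.eq_of_mem_replicate hs
    simp at this
  · exact no_sys_step m Q' h1

/-- Main counterexample argument: if every lock's take is reachable in `tb` through
takes only, then the translation is not correct. -/
lemma main_contra (IS : Store 2) (tb tq : List (LSym 2)) (hc : Correct IS tb tq)
    (H : ∀ i : Fin 2, ∃ l r, tb = l ++ (LOp.take, i) :: r ∧ ∀ x ∈ l, x.1 = LOp.take) :
    False := by
  set cnt := tb.countP (fun x => decide (x.1 = LOp.put)) with hcnt
  set P : SProc := Multiset.replicate (cnt + 1) (([SSym.bang], true) : SSub) with hP
  have htrans : transProc tb tq P = Multiset.replicate (cnt + 1) ((tb, true) : LSub 2) := by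
    simp [transProc, transSub, hP, Multiset.map_replicate]
  obtain ⟨t, ht, hs⟩ := run_copy tb H tb cnt 0 IS (le_refl _)
  have hL : LMayConv (transProc tb tq P, IS) := by
    refine ⟨t, ?_, hs⟩
    rw [htrans]
    have : Multiset.replicate (cnt + 1) ((tb, true) : LSub 2) =
        (tb, true) ::ₘ (Multiset.replicate cnt (tb, true) + 0) := by
      simp [Multiset.replicate_succ]
    rw [this]
    exact ht
  exact not_smayconv (cnt + 1) (((hc P).1).mpr hL)

end Aux

/-- for a correct translation of blocking type `(P_1P_1, P_2P_2)`
(any initial store), the prefix of `τ(!)` can be neither `T_1⁺ T_2` nor `T_2⁺ T_1`. -/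
theorem send_prefix_not_takes :
    ∀ (IS : Store 2) (tb tq : List (LSym 2)),
      Correct IS tb tq →
      BlockingTypePP IS tb 0 → BlockingTypePP IS tq 1 →
      (¬ ∃ (n : ℕ) (rest : List (LSym 2)), 0 < n ∧
          tb = List.replicate n (LOp.take, (0 : Fin 2)) ++ (LOp.take, (1 : Fin 2)) :: rest) ∧
      (¬ ∃ (n : ℕ) (rest : List (LSym 2)), 0 < n ∧
          tb = List.replicate n (LOp.take, (1 : Fin 2)) ++ (LOp.take, (0 : Fin 2)) :: rest) := by
  intro IS tb tq hc _ _
  constructor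
  · rintro ⟨n, rest, hn, htb⟩
    obtain ⟨n, rfl⟩ : ∃ m, n = m + 1 := ⟨n - 1, by omega⟩
    refine main_contra IS tb tq hc ?_
    intro i
    fin_cases i
    · exact ⟨[], List.replicate n (LOp.take, (0 : Fin 2)) ++ (LOp.take, (1 : Fin 2)) :: rest,
        by simpa [List.replicate_succ] using htb, by simp⟩
    · exact ⟨List.replicate (n + 1) (LOp.take, (0 : Fin 2)), rest, htb,
        fun x hx => by simp_all [List.eq_of_mem_replicate hx]⟩
  · rintro ⟨n, rest, hn, htb⟩
    obtain ⟨n, rfl⟩ : ∃ m, n = m + 1 := ⟨n - 1, by omega⟩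
    refine main_contra IS tb tq hc ?_
    intro i
    fin_cases i
    · exact ⟨List.replicate (n + 1) (LOp.take, (1 : Fin 2)), rest, htb,
        fun x hx => by simp_all [List.eq_of_mem_replicate hx]⟩
    · exact ⟨[], List.replicate n (LOp.take, (1 : Fin 2)) ++ (LOp.take, (0 : Fin 2)) :: rest,
        by simpa [List.replicate_succ] using htb, by simp⟩
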